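/- Let X^c = ((u_i^c, x_i^c))_i ∈ Ω. Say that X^c belongs to Ω^c if X^c minimizes Σ_i C_i(u_i,x_i) over the restricted feasible set {X ∈ Ω : u_i ≤ u_i^c and x_i ≤ x_i^c for all i}. Then Ω^c = Ω', i.e. a primal-feasible point is a fixed point of the restricted minimization correspondence if and only if it has no generator i with w_i ≠ 0, u_i = 1 and x_i = 0. -/
import Mathlib


noncomputable section

/-- Feasible set of a single generator with capacity `xmax`:
binary state `u ∈ {0,1}` and output `0 ≤ x ≤ u · xmax`. -/
def Gen (xmax : ℝ) : Set (ℝ × ℝ) :=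
  {ux | (ux.1 = 0 ∨ ux.1 = 1) ∧ 0 ≤ ux.2 ∧ ux.2 ≤ ux.1 * xmax}

/-- Cost of a generator: start-up cost `w·u` plus variable cost `c x`. -/
def Cost (w : ℝ) (c : ℝ → ℝ) (ux : ℝ × ℝ) : ℝ := w * ux.1 + c ux.2

/-- Primal feasible set: each generator in its feasible set, total output equals demand. -/
def Omega (n : ℕ) (xmax : Fin n → ℝ) (d : ℝ) : Set (Fin n → ℝ × ℝ) :=
  {X | (∀ i, X i ∈ Gen (xmax i)) ∧ ∑ i, (X i).2 = d}

/-- Proposition 1: a primal-feasible point `Xc` is a fixed point of the restricted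
minimization correspondence (i.e. `Xc ∈ Ωᶜ`) iff it has no generator `i` with
`w i ≠ 0`, `u i = 1` and `x i = 0` (i.e. `Xc ∈ Ω'`). -/
theorem stmt_0 (n : ℕ) (d : ℝ) (hd : 0 < d)
    (w xmax : Fin n → ℝ) (c : Fin n → ℝ → ℝ)
    (hxmax : ∀ i, 0 < xmax i) (hw : ∀ i, 0 ≤ w i)
    (hconv : ∀ i, ConvexOn ℝ (Set.Icc 0 (xmax i)) (c i))
    (hmono : ∀ i, MonotoneOn (c i) (Set.Icc 0 (xmax i)))
    (hcont : ∀ i, ContinuousOn (c i) (Set.Icc 0 (xmax i)))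
    (hc0 : ∀ i, c i 0 = 0)
    (hfeas : d ≤ ∑ i, xmax i)
    (Xc : Fin n → ℝ × ℝ) (hXc : Xc ∈ Omega n xmax d) :
    (Xc ∈ {X ∈ Omega n xmax d | ∀ i, (X i).1 ≤ (Xc i).1 ∧ (X i).2 ≤ (Xc i).2} ∧
      ∀ X ∈ {X ∈ Omega n xmax d | ∀ i, (X i).1 ≤ (Xc i).1 ∧ (X i).2 ≤ (Xc i).2},
        ∑ i, Cost (w i) (c i) (Xc i) ≤ ∑ i, Cost (w i) (c i) (X i))
    ↔ ¬ ∃ i, w i ≠ 0 ∧ (Xc i).1 = 1 ∧ (Xc i).2 = 0 := by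
  constructor
  · rintro ⟨hmem, hmin⟩ ⟨i, hwi, hu1, hx0⟩
    set X : Fin n → ℝ × ℝ := Function.update Xc i (0, 0) with hX
    have hxeq : ∀ j, (X j).2 = (Xc j).2 := by
      intro j
      by_cases hj : j = i
      · subst hj; simp [hX, hx0]
      · simp [hX, Function.update_of_ne hj]
    have hXmem : X ∈ {X ∈ Omega n xmax d | ∀ j, (X j).1 ≤ (Xc j).1 ∧ (X j).2 ≤ (Xc j).2} := by
      refine ⟨⟨?_, ?_⟩, ?_⟩
      · intro j
        by_cases hj : j = i
        · subst hj
          simp only [hX, Function.update_self]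
          exact ⟨Or.inl rfl, le_refl 0, by simp⟩
        · simpa [hX, Function.update_of_ne hj] using hXc.1 j
      · rw [show ∑ j, (X j).2 = ∑ j, (Xc j).2 from Finset.sum_congr rfl fun j _ => hxeq j]
        exact hXc.2
      · intro j
        refine ⟨?_, le_of_eq (hxeq j)⟩
        by_cases hj : j = i
        · subst hj; simp [hX, hu1]
        · simp [hX, Function.update_of_ne hj]
    have hle := hmin X hXmem
    have hcost : ∀ j, Cost (w j) (c j) (X j) = Cost (w j) (c j) (Xc j) - (if j = i then w i else 0) := by
      intro j
      by_cases hj : j = i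
      · subst hj; simp [hX, Cost, hu1, hx0]
      · simp [hX, Function.update_of_ne hj, hj]
    rw [Finset.sum_congr rfl fun j _ => hcost j, Finset.sum_sub_distrib,
      Finset.sum_ite_eq' Finset.univ i (fun _ => w i)] at hle
    simp only [Finset.mem_univ, if_true] at hle
    have : 0 < w i := lt_of_le_of_ne (hw i) (Ne.symm hwi)
    linarith
  · intro h
    refine ⟨⟨hXc, fun i => ⟨le_refl _, le_refl _⟩⟩, ?_⟩
    rintro X ⟨⟨hGen, hsum⟩, hle⟩
    have hxeq : ∀ i ∈ Finset.univ, (X i).2 = (Xc i).2 := by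
      rw [← Finset.sum_eq_sum_iff_of_le (fun i _ => (hle i).2)]
      rw [hsum, hXc.2]
    refine Finset.sum_le_sum fun i _ => ?_
    have hx : (X i).2 = (Xc i).2 := hxeq i (Finset.mem_univ i)
    unfold Cost
    rw [hx]
    have : w i * (Xc i).1 = w i * (X i).1 := by
      by_cases hwi : w i = 0
      · simp [hwi]
      · congr 1
        by_contra hne
        have hu : (X i).1 < (Xc i).1 := lt_of_le_of_ne (hle i).1 (Ne.symm hne)
        rcases (hGen i).1 with h0 | h1
        · rcases (hXc.1 i).1 with hc0' | hc1
          · exact hne (by rw [h0, hc0'])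
          · have hxi0 : (X i).2 = 0 :=
              le_antisymm (by simpa [h0] using (hGen i).2.2) (hGen i).2.1
            exact h ⟨i, hwi, hc1, by rw [← hx, hxi0]⟩
        · rcases (hXc.1 i).1 with hc0' | hc1
          · rw [h1, hc0'] at hu; linarith
          · exact hne (hc1.trans h1.symm)
    linarith
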